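/- Suppose no cycle in the original DSR graph D contains a bispecies production edge. Then for any cycle C̃ of the modified DSR graph D̃, either Φ(C̃) is a c-pair in D, or Φ restricted to C̃ is injective (on both vertices and edges) and Φ(C̃) is a cycle in D. -/

import Mathlib

/-- A reaction network on `n` species: `R` indexes the reaction nodes
(a reversible pair of reactions counts as one node), `src r`/`tgt r` are the
reactant/product stoichiometric vectors, and `rev r` records reversibility.
Generalized inflows/outflows are assumed not to be included in `R`. -/
structure Net (n : ℕ) where
  R : Type
  src : R → Fin n → ℕ
  tgt : R → Fin n → ℕ
  rev : R → Prop

namespace Net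

variable {n : ℕ}

/-- (N2): no one-step catalysis. -/
def noCat (N : Net n) : Prop := ∀ r i, N.src r i = 0 ∨ N.tgt r i = 0

/-- The number of distinct reactant species of reaction `r`. -/
def numReact (N : Net n) (r : N.R) : ℕ :=
  (Finset.univ.filter fun i => N.src r i ≠ 0).card

/-- (N3): every reaction has at most two distinct reactant species. -/
def atMostTwo (N : Net n) : Prop := ∀ r, N.numReact r ≤ 2

/-- A bispecies reaction: exactly two distinct reactant species. -/
def bisp (N : Net n) (r : N.R) : Prop := N.numReact r = 2

/-- (N4): every bispecies reaction is irreversible. -/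
def bispIrrev (N : Net n) : Prop := ∀ r, N.bisp r → ¬ N.rev r

/-- Species `i` is adjacent to the R-node `r` in the DSR graph. -/
def edge (N : Net n) (i : Fin n) (r : N.R) : Prop := N.src r i ≠ 0 ∨ N.tgt r i ≠ 0

/-- The edge between `i` and `r` is directed (toward the species `i`):
the reaction is irreversible and `i` is a product species only. -/
def dir (N : Net n) (i : Fin n) (r : N.R) : Prop :=
  ¬ N.rev r ∧ N.src r i = 0 ∧ N.tgt r i ≠ 0

/-- The stoichiometric label of the edge between `i` and `r` (for a network
with no one-step catalysis at most one summand is nonzero). -/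
def lab (N : Net n) (i : Fin n) (r : N.R) : ℕ := N.src r i + N.tgt r i

/-- The edges from `i` and `j` to `r` form a c-pair. -/
def cpair (N : Net n) (r : N.R) (i j : Fin n) : Prop :=
  i ≠ j ∧ N.src r i ≠ 0 ∧ N.src r j ≠ 0

/-- Bispecies production edge: a directed edge from a bispecies R-node to one
of its product species. -/
def bpe (N : Net n) (i : Fin n) (r : N.R) : Prop := N.bisp r ∧ N.dir i r

/-- The modified network: reactions with at most one reactant species are kept,
while each bispecies reaction `y → y'` is replaced, for each reactant species
`i`, by the reaction `yᵢ·eᵢ → y' + y − yᵢ·eᵢ` (irreversible). -/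
def modified (N : Net n) : Net n where
  R := {r : N.R // ¬ N.bisp r} ⊕ {p : N.R × Fin n // N.bisp p.1 ∧ N.src p.1 p.2 ≠ 0}
  src := Sum.elim (fun r j => N.src r.1 j)
    (fun p j => if j = p.1.2 then N.src p.1.1 j else 0)
  tgt := Sum.elim (fun r j => N.tgt r.1 j)
    (fun p j => if j = p.1.2 then N.tgt p.1.1 j else N.tgt p.1.1 j + N.src p.1.1 j)
  rev := Sum.elim (fun r => N.rev r.1) (fun _ => False)

/-- The map `Φ` on R-nodes: identity on copied reactions, and each modified
reaction node is sent to the original reaction it arose from.  (On species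
nodes `Φ` is the identity.) -/
def phi (N : Net n) : (N.modified).R → N.R :=
  Sum.elim (fun r => r.1) (fun p => p.1.1)

/-- A cycle in the DSR graph with `m+2` species nodes `s k` and `m+2` reaction
nodes `r k`, traversed `s k → r k → s (k+1) → ⋯`; the traversal must be
compatible with edge orientations (directed edges point toward species, so the
edges traversed species-to-reaction must be undirected), and the cycle is
simple. -/
structure Cycle (N : Net n) (m : ℕ) where
  s : Fin (m + 2) → Fin n
  r : Fin (m + 2) → N.R
  edge_sr : ∀ k, N.edge (s k) (r k)
  undir_sr : ∀ k, ¬ N.dir (s k) (r k)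
  edge_rs : ∀ k, N.edge (s (k + 1)) (r k)
  sinj : Function.Injective s
  rinj : Function.Injective r

/-- s-cycle: the alternating product/quotient of stoichiometric labels along
the cycle equals 1, i.e. the product of the labels of the species-to-reaction
edges equals that of the reaction-to-species edges. -/
def Cycle.sCycle {N : Net n} {m : ℕ} (C : N.Cycle m) : Prop :=
  (∏ k, N.lab (C.s k) (C.r k)) = ∏ k, N.lab (C.s (k + 1)) (C.r k)

/-- The cycle contains a bispecies production edge. -/
def Cycle.hasBPE {N : Net n} {m : ℕ} (C : N.Cycle m) : Prop :=
  ∃ k, N.bpe (C.s (k + 1)) (C.r k)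

/-- The edge `(i, ρ)` occurs in `C` traversed species-to-reaction. -/
def Cycle.eS {N : Net n} {m : ℕ} (C : N.Cycle m) (i : Fin n) (ρ : N.R) : Prop :=
  ∃ k, C.s k = i ∧ C.r k = ρ

/-- The edge `(i, ρ)` occurs in `C` traversed reaction-to-species. -/
def Cycle.eR {N : Net n} {m : ℕ} (C : N.Cycle m) (i : Fin n) (ρ : N.R) : Prop :=
  ∃ k, C.s (k + 1) = i ∧ C.r k = ρ

/-- The edge `(i, ρ)` occurs in the cycle `C`. -/
def Cycle.mem {N : Net n} {m : ℕ} (C : N.Cycle m) (i : Fin n) (ρ : N.R) : Prop :=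
  C.eS i ρ ∨ C.eR i ρ

/-- The edge `(i, ρ)` lies in the image under `Φ` of the cycle `C` of the
modified DSR graph. -/
def Cycle.phiMem {N : Net n} {m : ℕ} (C : (N.modified).Cycle m) (i : Fin n)
    (ρ : N.R) : Prop :=
  ∃ k, N.phi (C.r k) = ρ ∧ (C.s k = i ∨ C.s (k + 1) = i)

/-- The image of `C` under `Φ` is a c-pair of the original DSR graph. -/
def Cycle.isCPairImage {N : Net n} {m : ℕ} (C : (N.modified).Cycle m) : Prop :=
  ∃ r i j, N.cpair r i j ∧ ∀ i' r', C.phiMem i' r' ↔ (r' = r ∧ (i' = i ∨ i' = j))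

/-- A path of odd length `2t+1` in the DSR graph, with species nodes
`s 0, …, s t` and reaction nodes `r 0, …, r t`, alternating
`s 0 – r 0 – s 1 – r 1 – ⋯ – s t – r t`; one endpoint is a species node and
the other is a reaction node. -/
structure SRPath (N : Net n) (t : ℕ) where
  s : ℕ → Fin n
  r : ℕ → N.R
  sinj : ∀ k l, k ≤ t → l ≤ t → s k = s l → k = l
  rinj : ∀ k l, k ≤ t → l ≤ t → r k = r l → k = l

/-- The edge `(i, ρ)` occurs in the path `P`. -/
def SRPath.memEdge {N : Net n} {t : ℕ} (P : N.SRPath t) (i : Fin n) (ρ : N.R) : Prop :=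
  (∃ k ≤ t, P.s k = i ∧ P.r k = ρ) ∨ (∃ k < t, P.s (k + 1) = i ∧ P.r k = ρ)

/-- The species node `i` occurs in the path `P`. -/
def SRPath.memS {N : Net n} {t : ℕ} (P : N.SRPath t) (i : Fin n) : Prop :=
  ∃ k ≤ t, P.s k = i

/-- The reaction node `ρ` occurs in the path `P`. -/
def SRPath.memR {N : Net n} {t : ℕ} (P : N.SRPath t) (ρ : N.R) : Prop :=
  ∃ k ≤ t, P.r k = ρ

/-- Two paths are vertex-disjoint. -/
def SRPath.Disjoint {N : Net n} {t1 t2 : ℕ} (P : N.SRPath t1) (Q : N.SRPath t2) : Prop :=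
  (∀ i, ¬ (P.memS i ∧ Q.memS i)) ∧ ∀ ρ, ¬ (P.memR ρ ∧ Q.memR ρ)

/-- The edge `(i, ρ)` is shared by the cycles `C1` and `C2`. -/
def sharedEdge {N : Net n} {m1 m2 : ℕ} (C1 : N.Cycle m1) (C2 : N.Cycle m2)
    (i : Fin n) (ρ : N.R) : Prop := C1.mem i ρ ∧ C2.mem i ρ

/-- Each shared edge is traversed with the same orientation by both cycles. -/
def consistent {N : Net n} {m1 m2 : ℕ} (C1 : N.Cycle m1) (C2 : N.Cycle m2) : Prop :=
  ∀ i ρ, sharedEdge C1 C2 i ρ →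
    ((C1.eS i ρ ↔ C2.eS i ρ) ∧ (C1.eR i ρ ↔ C2.eR i ρ))

/-- `C1` and `C2` have S-to-R intersection: the set of shared edges is
non-empty, orientations are consistent, and the shared edges decompose into
pairwise vertex-disjoint paths of odd length (each with one species endpoint
and one reaction endpoint) — i.e. every connected component of the
intersection is such a path. -/
def SRIntxn {N : Net n} {m1 m2 : ℕ} (C1 : N.Cycle m1) (C2 : N.Cycle m2) : Prop :=
  (∃ i ρ, sharedEdge C1 C2 i ρ) ∧ consistent C1 C2 ∧
    ∃ (ι : Type) (t : ι → ℕ) (P : (a : ι) → N.SRPath (t a)),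
      (∀ i ρ, sharedEdge C1 C2 i ρ ↔ ∃ a, (P a).memEdge i ρ) ∧
      ∀ a b, a ≠ b → (P a).Disjoint (P b)

/-- The DSR graph of `N` has an S-to-R intersection. -/
def hasSRIntxn (N : Net n) : Prop :=
  ∃ (m1 m2 : ℕ) (C1 : N.Cycle m1) (C2 : N.Cycle m2), SRIntxn C1 C2

end Net

open Fin.NatCast Fin.CommRing

namespace Net

variable {n : ℕ} {N : Net n}

/-- Classification of reactant species of a bispecies reaction. -/
lemma bisp_reactant {ρ : N.R} {i j z : Fin n} (hb : N.bisp ρ) (hij : i ≠ j)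
    (hi : N.src ρ i ≠ 0) (hj : N.src ρ j ≠ 0) (hz : N.src ρ z ≠ 0) :
    z = i ∨ z = j := by
  have hsub : ({i, j} : Finset (Fin n)) ⊆
      Finset.univ.filter fun x => N.src ρ x ≠ 0 := by
    intro x hx
    simp only [Finset.mem_insert, Finset.mem_singleton] at hx
    rcases hx with rfl | rfl <;> simp [hi, hj]
  have hcard : (Finset.univ.filter fun x => N.src ρ x ≠ 0).card ≤
      ({i, j} : Finset (Fin n)).card := by
    rw [Finset.card_insert_of_notMem (by simp [hij]), Finset.card_singleton]
    exact le_of_eq hb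
  have := Finset.eq_of_subset_of_card_le hsub hcard
  have hzmem : z ∈ ({i, j} : Finset (Fin n)) := by
    rw [this]; simp [hz]
  simpa using hzmem

/-- The species node preceding a modified bispecies reaction node in a cycle
is the corresponding reactant. -/
lemma species_at_inr {m : ℕ} (C : (N.modified).Cycle m) (k : Fin (m + 2))
    {p : N.R × Fin n} {hp : N.bisp p.1 ∧ N.src p.1 p.2 ≠ 0}
    (hk : C.r k = Sum.inr ⟨p, hp⟩) : C.s k = p.2 := by
  by_contra hne
  have hedge := C.edge_sr k
  have hundir := C.undir_sr k
  rw [hk] at hedge hundir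
  apply hundir
  refine ⟨by simp [modified], ?_, ?_⟩
  · simp only [modified, Sum.elim_inr]
    rw [if_neg hne]
  · rcases hedge with h | h
    · simp only [modified, Sum.elim_inr] at h
      rw [if_neg hne] at h
      exact absurd rfl h
    · exact h

/-- Edges of the modified DSR graph map to edges of the original one. -/
lemma edge_phi {i : Fin n} {R : (N.modified).R} (h : (N.modified).edge i R) :
    N.edge i (N.phi R) := by
  rcases R with r | ⟨⟨ρ, x⟩, hb, hx⟩
  · exact h
  · by_cases hix : i = x
    · subst hix; exact Or.inl hx
    · have h' : N.tgt ρ i + N.src ρ i ≠ 0 := by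
        rcases h with h | h
        · simp only [modified, Sum.elim_inr] at h
          rw [if_neg hix] at h
          exact absurd rfl h
        · simp only [modified, Sum.elim_inr] at h
          rwa [if_neg hix] at h
      show N.src ρ i ≠ 0 ∨ N.tgt ρ i ≠ 0
      omega

/-- An edge traversed species-to-reaction in a cycle of the modified DSR graph
maps to an undirected edge of the original one. -/
lemma undir_phi {m : ℕ} (C : (N.modified).Cycle m) (k : Fin (m + 2)) :
    ¬ N.dir (C.s k) (N.phi (C.r k)) := by
  rcases hR : C.r k with r | ⟨⟨ρ, x⟩, hb, hx⟩
  · intro hd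
    apply C.undir_sr k
    rw [hR]
    exact ⟨hd.1, hd.2.1, hd.2.2⟩
  · have hsk := species_at_inr C k hR
    intro hd
    apply hx
    rw [← hsk]
    exact hd.2.1

/-- Structure of a `Φ`-collision: both nodes are modified copies of the same
bispecies reaction, with distinct reactant species. -/
lemma collision {m : ℕ} (C : (N.modified).Cycle m) {k l : Fin (m + 2)}
    (hkl : k ≠ l) (h : N.phi (C.r k) = N.phi (C.r l)) :
    ∃ (ρ : N.R) (i j : Fin n), N.bisp ρ ∧ i ≠ j ∧
      N.src ρ i ≠ 0 ∧ N.src ρ j ≠ 0 ∧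
      C.s k = i ∧ C.s l = j ∧ N.phi (C.r k) = ρ ∧
      (∃ hp, C.r k = Sum.inr ⟨(ρ, i), hp⟩) ∧
      (∃ hp, C.r l = Sum.inr ⟨(ρ, j), hp⟩) := by
  rcases hK : C.r k with r1 | ⟨⟨ρ1, x1⟩, hb1, hx1⟩ <;>
    rcases hL : C.r l with r2 | ⟨⟨ρ2, x2⟩, hb2, hx2⟩ <;>
      rw [hK, hL] at h <;> simp only [phi, Sum.elim_inl, Sum.elim_inr] at h
  · exact absurd (C.rinj (by rw [hK, hL]; exact congrArg Sum.inl (Subtype.ext h))) hkl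
  · exact absurd (by rw [h]; exact hb2) r1.2
  · exact absurd (by rw [← h]; exact hb1) r2.2
  · simp only at h hb1 hb2 hx1 hx2
    subst h
    have hx12 : x1 ≠ x2 := by
      intro hx
      subst hx
      exact hkl (C.rinj (hK.trans hL.symm))
    exact ⟨ρ1, x1, x2, hb1, hx12, hx1, hx2, species_at_inr C k hK,
      species_at_inr C l hL, rfl, ⟨⟨hb1, hx1⟩, rfl⟩, ⟨⟨hb2, hx2⟩, rfl⟩⟩


lemma fcast_inj {M x y : ℕ} (hx : x < M + 2) (hy : y < M + 2)
    (h : (x : Fin (M + 2)) = (y : Fin (M + 2))) : x = y := by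
  have := congrArg Fin.val h
  rwa [Fin.val_natCast, Fin.val_natCast, Nat.mod_eq_of_lt hx, Nat.mod_eq_of_lt hy] at this

lemma fadd_cast_inj {M : ℕ} (c : Fin (M + 2)) {x y : ℕ} (hx : x < M + 2) (hy : y < M + 2)
    (h : c + (x : Fin (M + 2)) = c + (y : Fin (M + 2))) : x = y :=
  fcast_inj hx hy (add_left_cancel h)

lemma fcast_inj_of_le {M x y : ℕ} (hx : 0 < x) (hx' : x ≤ M + 2) (hy : 0 < y)
    (hy' : y ≤ M + 2) (h : (x : Fin (M + 2)) = (y : Fin (M + 2))) : x = y := by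
  have hv := congrArg Fin.val h
  rw [Fin.val_natCast, Fin.val_natCast] at hv
  rcases eq_or_lt_of_le hx' with rfl | hx2 <;> rcases eq_or_lt_of_le hy' with rfl | hy2
  · rfl
  · rw [Nat.mod_self, Nat.mod_eq_of_lt hy2] at hv; omega
  · rw [Nat.mod_self, Nat.mod_eq_of_lt hx2] at hv; omega
  · rw [Nat.mod_eq_of_lt hx2, Nat.mod_eq_of_lt hy2] at hv; exact hv

lemma fcast_add_one {M x : ℕ} : ((x + 1 : ℕ) : Fin (M + 2)) = (x : Fin (M + 2)) + 1 := by
  push_cast; ring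

lemma fcast_self_eq_zero {M : ℕ} : ((M + 2 : ℕ) : Fin (M + 2)) = 0 := by simp

lemma fone_ne_zero {M : ℕ} : (1 : Fin (M + 2)) ≠ 0 := by
  intro h
  have := congrArg Fin.val h
  simp [Fin.val_one] at this

lemma ftwo_ne_zero {M : ℕ} (hM : 1 ≤ M) : (2 : Fin (M + 2)) ≠ 0 := by
  intro h
  have h2 : ((2 : ℕ) : Fin (M + 2)) = ((0 : ℕ) : Fin (M + 2)) := by push_cast; rw [h]
  have := fcast_inj (by omega) (by omega) h2
  omega

lemma ftwo_ne_one {M : ℕ} (hM : 1 ≤ M) : (2 : Fin (M + 2)) ≠ 1 := by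
  intro h
  have h2 : ((2 : ℕ) : Fin (M + 2)) = ((1 : ℕ) : Fin (M + 2)) := by push_cast; rw [h]
  have := fcast_inj (by omega) (by omega) h2
  omega

/-- Key lemma: no cycle of the modified DSR graph contains an edge mapping to
a bispecies production edge of the original DSR graph. -/
lemma noBPEim (N : Net n) (h4 : N.bispIrrev)
    (hnb : ∀ (m : ℕ) (C : N.Cycle m), ¬ C.hasBPE) :
    ∀ m (C : (N.modified).Cycle m) (a : Fin (m + 2)),
      ¬ N.bpe (C.s (a + 1)) (N.phi (C.r a)) := by
  intro m
  induction m using Nat.strong_induction_on with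
  | _ m IH =>
  intro C a hbpe
  classical
  obtain ⟨hbρ, hdρ⟩ := hbpe
  by_cases hinj : Function.Injective fun k => N.phi (C.r k)
  · exact hnb m ⟨C.s, fun k => N.phi (C.r k),
      fun k => edge_phi (C.edge_sr k), fun k => undir_phi C k,
      fun k => edge_phi (C.edge_rs k), C.sinj, hinj⟩ ⟨a, hbρ, hdρ⟩
  · rw [Function.not_injective_iff] at hinj
    obtain ⟨k, l, hfkl, hkl⟩ := hinj
    set f : ℕ → N.R := fun t => N.phi (C.r (a + (t : Fin (m + 2)))) with hfdef
    have h1 : a + (((k - a : Fin (m + 2)).val : ℕ) : Fin (m + 2)) = k := by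
      rw [Fin.cast_val_eq_self]; ring_nf
    have h2 : a + (((l - a : Fin (m + 2)).val : ℕ) : Fin (m + 2)) = l := by
      rw [Fin.cast_val_eq_self]; ring_nf
    set t1 : ℕ := (k - a : Fin (m + 2)).val with ht1
    set t2 : ℕ := (l - a : Fin (m + 2)).val with ht2
    have hft : f t1 = f t2 := by
      show N.phi (C.r (a + (t1 : Fin (m + 2)))) = N.phi (C.r (a + (t2 : Fin (m + 2))))
      rw [h1, h2]; exact hfkl
    have ht12 : t1 ≠ t2 := fun h => hkl (by rw [← h1, ← h2, h])
    have hb1 : t1 < m + 2 := (k - a).isLt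
    have hb2 : t2 < m + 2 := (l - a).isLt
    have key : ∃ u, u ≤ m + 1 ∧ ∃ v, v < u ∧ f u = f v := by
      rcases Nat.lt_or_ge t1 t2 with h | h
      · exact ⟨t2, by omega, t1, h, hft.symm⟩
      · exact ⟨t1, by omega, t2, by omega, hft⟩
    set u : ℕ := Nat.find key with hudef
    have hu := Nat.find_spec key
    have hum1 : u ≤ m + 1 := hu.1
    obtain ⟨v, hvu, hfuv⟩ := hu.2
    have hinj' : ∀ w w', w < w' → w' < u → f w' ≠ f w := by
      intro w w' hww hwu heq
      exact Nat.find_min key hwu ⟨by omega, w, hww, heq⟩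
    set A : Fin (m + 2) := a + (v : Fin (m + 2)) with hAdef
    set B : Fin (m + 2) := a + (u : Fin (m + 2)) with hBdef
    have hAB : A ≠ B := fun h => by
      have := fadd_cast_inj a (by omega) (by omega) h
      omega
    have hphiAB : N.phi (C.r A) = N.phi (C.r B) := hfuv.symm
    obtain ⟨ρ', x', y', hbρ', hxy', hsx', hsy', hsA, hsB, hphiA, ⟨hpA, hrA⟩, ⟨hpB, hrB⟩⟩ :=
      collision C hAB hphiAB
    rcases Nat.lt_or_ge (v + 1) u with hL2 | hL1
    · -- the extracted cycle has length ≥ 2 : contradiction with `hnb`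
      obtain ⟨L', hL'⟩ : ∃ L', u = v + 1 + (L' + 1) := ⟨u - v - 2, by omega⟩
      have hL'm : L' + 1 ≤ m := by omega
      set D : Fin (L' + 2) → Fin (m + 2) := fun t => A + 1 + ((t.val : ℕ) : Fin (m + 2))
        with hD
      have hD0 : D 0 = A + 1 := by simp [hD]
      have hDsucc : ∀ t : Fin (L' + 2), t.val < L' + 1 → D (t + 1) = D t + 1 := by
        intro t ht
        have hlt : t < Fin.last (L' + 1) := by
          rw [Fin.lt_def, Fin.val_last]; exact ht
        simp only [hD, Fin.val_add_one_of_lt hlt, fcast_add_one]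
        ring
      have hDlast : D (Fin.last (L' + 1)) = B := by
        simp only [hD, Fin.val_last, hAdef, hBdef, hL']
        push_cast
        ring
      have hDf : ∀ t : Fin (L' + 2), D t = a + ((v + 1 + t.val : ℕ) : Fin (m + 2)) := by
        intro t
        simp only [hD, hAdef]
        push_cast
        ring
      have hsrc0 : N.src ρ' (C.s (A + 1)) = 0 := by
        by_contra hs
        rcases bisp_reactant hbρ' hxy' hsx' hsy' hs with he | he
        · rw [← hsA] at he
          have h6 := C.sinj he
          have h7 : (1 : Fin (m + 2)) = 0 :=
            add_left_cancel (h6.trans (add_zero A).symm)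
          exact fone_ne_zero h7
        · rw [← hsB] at he
          have h7 := C.sinj he
          rw [hAdef, hBdef] at h7
          have h8 : a + ((v + 1 : ℕ) : Fin (m + 2)) = a + ((u : ℕ) : Fin (m + 2)) := by
            rw [fcast_add_one, ← add_assoc]; exact h7
          have := fadd_cast_inj a (by omega) (by omega) h8
          omega
      have htgt : N.tgt ρ' (C.s (A + 1)) ≠ 0 := by
        have hedge : N.edge (C.s (A + 1)) ρ' := by
          rw [← hphiA]
          exact edge_phi (C.edge_rs A)
        rcases hedge with he | he
        · exact absurd hsrc0 he
        · exact he
      refine absurd ?hbpe (hnb L' ⟨fun t => C.s (D t), fun t => N.phi (C.r (D t)),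
        fun t => edge_phi (C.edge_sr (D t)), fun t => undir_phi C (D t),
        ?hrs, ?hsinj, ?hrinj⟩)
      case hrs =>
        intro t
        show N.edge (C.s (D (t + 1))) (N.phi (C.r (D t)))
        by_cases ht : t.val < L' + 1
        · rw [hDsucc t ht]
          exact edge_phi (C.edge_rs (D t))
        · have htv : t = Fin.last (L' + 1) := by
            apply Fin.ext
            rw [Fin.val_last]
            have := t.isLt
            omega
          rw [htv, Fin.last_add_one, hD0, hDlast, ← hphiAB]
          exact edge_phi (C.edge_rs A)
      case hsinj =>
        intro t t' h
        have hD' : D t = D t' := C.sinj h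
        simp only [hD] at hD'
        exact Fin.ext (fadd_cast_inj (A + 1) (by have := t.isLt; omega)
          (by have := t'.isLt; omega) hD')
      case hrinj =>
        intro t t' h
        simp only at h
        rw [hDf t, hDf t'] at h
        have h' : f (v + 1 + t.val) = f (v + 1 + t'.val) := by
          simp only [hfdef]; exact h
        have haux : ∀ s1 s2 : ℕ, s2 ≤ L' + 1 → s1 < s2 →
            f (v + 1 + s1) ≠ f (v + 1 + s2) := by
          intro s1 s2 hs2 hlt heq
          rcases Nat.lt_or_ge (v + 1 + s2) u with h3 | h3
          · exact hinj' (v + 1 + s1) (v + 1 + s2) (by omega) h3 heq.symm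
          · have h4' : v + 1 + s2 = u := by omega
            rw [h4', hfuv] at heq
            exact hinj' v (v + 1 + s1) (by omega) (by omega) heq
        rcases Nat.lt_trichotomy t.val t'.val with h5 | h5 | h5
        · exact absurd h' (haux _ _ (by have := t'.isLt; omega) h5)
        · exact Fin.ext h5
        · exact absurd h'.symm (haux _ _ (by have := t.isLt; omega) h5)
      case hbpe =>
        refine ⟨Fin.last (L' + 1), ?_⟩
        show N.bpe (C.s (D (Fin.last (L' + 1) + 1))) (N.phi (C.r (D (Fin.last (L' + 1)))))
        rw [Fin.last_add_one, hD0, hDlast, ← hphiAB, hphiA]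
        exact ⟨hbρ', h4 ρ' hbρ', hsrc0, htgt⟩
    · -- u = v + 1
      have huv1 : u = v + 1 := by omega
      by_cases hv0 : v = 0
      · -- immediate contradiction
        have hA : A = a := by rw [hAdef, hv0]; simp
        have hB : B = a + 1 := by
          rw [hBdef, huv1, hv0]
          norm_num
        apply hsy'
        rw [← hsB, hB, ← hphiA, hA]
        exact hdρ.2.1
      · -- contract the two adjacent modified nodes and use the IH
        have hv1 : 1 ≤ v := Nat.one_le_iff_ne_zero.mpr hv0
        have hm1 : 1 ≤ m := by omega
        obtain ⟨m', rfl⟩ : ∃ m', m = m' + 1 := ⟨m - 1, by omega⟩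
        have hBA : B = A + 1 := by
          rw [hAdef, hBdef, huv1, fcast_add_one]
          ring
        set emb : Fin (m' + 2) → Fin (m' + 1 + 2) :=
          fun t => A + ((t.val + 2 : ℕ) : Fin (m' + 1 + 2)) with hemb
        have hembinj : Function.Injective emb := by
          intro t t' h
          simp only [hemb] at h
          have h1' := add_left_cancel h
          have h2' := fcast_inj_of_le (M := m' + 1) (by omega)
            (by have := t.isLt; omega) (by omega) (by have := t'.isLt; omega) h1'
          exact Fin.ext (by omega)
        have hembsucc : ∀ t : Fin (m' + 2), t.val < m' + 1 → emb (t + 1) = emb t + 1 := by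
          intro t ht
          have hlt : t < Fin.last (m' + 1) := by
            rw [Fin.lt_def, Fin.val_last]; exact ht
          simp only [hemb, Fin.val_add_one_of_lt hlt]
          rw [show t.val + 1 + 2 = (t.val + 2) + 1 by ring, fcast_add_one]
          ring
        have hemb0 : emb 0 = A + 2 := by
          simp only [hemb, Fin.val_zero]
          norm_num
        have hemblast : emb (Fin.last (m' + 1)) = A := by
          simp only [hemb, Fin.val_last]
          rw [fcast_self_eq_zero (M := m' + 1)]
          ring
        have hAA2 : A + 2 ≠ A := by
          intro h
          exact ftwo_ne_zero (M := m' + 1) (by omega)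
            (add_left_cancel (h.trans (add_zero A).symm))
        have hqx : C.s (A + 2) ≠ x' := fun h => hAA2 (C.sinj (h.trans hsA.symm))
        have hA2B : A + 2 ≠ B := by
          rw [hBA]
          intro h
          exact ftwo_ne_one (M := m' + 1) (by omega) (add_left_cancel h)
        have hqy : C.s (A + 2) ≠ y' := fun h => hA2B (C.sinj (h.trans hsB.symm))
        have hedge2 : N.tgt ρ' (C.s (A + 2)) + N.src ρ' (C.s (A + 2)) ≠ 0 := by
          have hB1 : B + 1 = A + 2 := by
            rw [hBA]
            ring
          have he := C.edge_rs B
          rw [hB1, hrB] at he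
          rcases he with he | he
          · simp only [modified, Sum.elim_inr] at he
            rw [if_neg hqy] at he
            exact absurd rfl he
          · simp only [modified, Sum.elim_inr] at he
            rwa [if_neg hqy] at he
        have hvlt : m' + 1 - v < m' + 2 := by omega
        set t0 : Fin (m' + 2) := ⟨m' + 1 - v, hvlt⟩ with ht0def
        refine absurd ?hbpe (IH m' (by omega) ⟨fun t => C.s (emb t), fun t => C.r (emb t),
          fun t => C.edge_sr (emb t), fun t => C.undir_sr (emb t), ?hrs,
          fun t t' h => hembinj (C.sinj h), fun t t' h => hembinj (C.rinj h)⟩ t0)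
        case hrs =>
          intro t
          show (N.modified).edge (C.s (emb (t + 1))) (C.r (emb t))
          by_cases ht : t.val < m' + 1
          · rw [hembsucc t ht]
            exact C.edge_rs (emb t)
          · have htv : t = Fin.last (m' + 1) := by
              apply Fin.ext
              rw [Fin.val_last]
              have := t.isLt
              omega
            rw [htv, Fin.last_add_one, hemb0, hemblast, hrA]
            refine Or.inr ?_
            simp only [modified, Sum.elim_inr]
            rw [if_neg hqx]
            exact hedge2
        case hbpe =>
          have ht0v : t0.val < m' + 1 := by
            rw [ht0def]
            show m' + 1 - v < m' + 1
            omega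
          have hsum : ((v : Fin (m' + 1 + 2))) + ((m' + 1 - v + 2 : ℕ) : Fin (m' + 1 + 2)) = 0 := by
            rw [← Nat.cast_add, show v + (m' + 1 - v + 2) = m' + 1 + 2 by omega,
              fcast_self_eq_zero (M := m' + 1)]
          have hembt0 : emb t0 = a := by
            simp only [hemb, ht0def, hAdef]
            calc a + (v : Fin (m' + 1 + 2)) + ((m' + 1 - v + 2 : ℕ) : Fin (m' + 1 + 2))
                = a + (((v : Fin (m' + 1 + 2))) + ((m' + 1 - v + 2 : ℕ) : Fin (m' + 1 + 2))) := by
                  ring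
              _ = a := by rw [hsum, add_zero]
          show N.bpe (C.s (emb (t0 + 1))) (N.phi (C.r (emb t0)))
          rw [hembsucc t0 ht0v, hembt0]
          exact ⟨hbρ, hdρ⟩

end Net

/-- If no cycle of the original DSR graph contains a bispecies production edge,
then every cycle `C̃` of the modified DSR graph either maps under `Φ` onto a
c-pair, or `Φ` is injective on `C̃` and its image is a cycle of the original
DSR graph. -/
theorem stmt_12 {n : ℕ} (N : Net n) (h2 : N.noCat) (h3 : N.atMostTwo)
    (h4 : N.bispIrrev) (hnb : ∀ (m : ℕ) (C : N.Cycle m), ¬ C.hasBPE)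
    {m : ℕ} (Ct : (N.modified).Cycle m) :
    Ct.isCPairImage ∨
      (Function.Injective (fun k => N.phi (Ct.r k)) ∧
        ∃ C : N.Cycle m, C.s = Ct.s ∧ C.r = fun k => N.phi (Ct.r k)) := by
  classical
  by_cases hinj : Function.Injective fun k => N.phi (Ct.r k)
  · exact Or.inr ⟨hinj, ⟨Ct.s, fun k => N.phi (Ct.r k),
      fun k => Net.edge_phi (Ct.edge_sr k), fun k => Net.undir_phi Ct k,
      fun k => Net.edge_phi (Ct.edge_rs k), Ct.sinj, hinj⟩, rfl, rfl⟩
  · left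
    rw [Function.not_injective_iff] at hinj
    obtain ⟨k, l, hfkl, hkl⟩ := hinj
    obtain ⟨ρ, i, j, hbρ, hij, hsi, hsj, hsk, hsl, hphik, ⟨hpk, hrk⟩, ⟨hpl, hrl⟩⟩ :=
      Net.collision Ct hkl hfkl
    have hnbpe := Net.noBPEim N h4 hnb m Ct
    have hphil : N.phi (Ct.r l) = ρ := by rw [hrl]; rfl
    -- after a modified node, the next species is a reactant of the reaction
    have hstep : ∀ (k' : Fin (m + 2)) (ρ'' : N.R) (x'' : Fin n)
        (hp'' : N.bisp ρ'' ∧ N.src ρ'' x'' ≠ 0),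
        Ct.r k' = Sum.inr ⟨(ρ'', x''), hp''⟩ → N.src ρ'' (Ct.s (k' + 1)) ≠ 0 := by
      intro k' ρ'' x'' hp'' hr'' hsrc0
      apply hnbpe k'
      have hne : Ct.s (k' + 1) ≠ x'' := by
        intro h
        rw [h] at hsrc0
        exact hp''.2 hsrc0
      have htgt : N.tgt ρ'' (Ct.s (k' + 1)) ≠ 0 := by
        have he := Ct.edge_rs k'
        rw [hr''] at he
        rcases he with he | he
        · simp only [Net.modified, Sum.elim_inr] at he
          rw [if_neg hne] at he
          exact absurd rfl he
        · simp only [Net.modified, Sum.elim_inr] at he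
          rw [if_neg hne] at he
          intro h0
          rw [h0, hsrc0] at he
          exact he rfl
      rw [hr'']
      exact ⟨hp''.1, h4 ρ'' hp''.1, hsrc0, htgt⟩
    -- the species after the node `(ρ, i)` is `j`, so `l = k + 1`
    have hskj : Ct.s (k + 1) = j := by
      rcases Net.bisp_reactant hbρ hij hsi hsj (hstep k ρ i hpk hrk) with h | h
      · exfalso
        have h1 := Ct.sinj (h.trans hsk.symm)
        exact Net.fone_ne_zero (add_left_cancel (h1.trans (add_zero k).symm))
      · exact h
    have hl1 : l = k + 1 := Ct.sinj (hsl.trans hskj.symm)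
    subst hl1
    -- the species after the node `(ρ, j)` is `i`, so the cycle closes up
    have hll : k + 1 + 1 = k := by
      rcases Net.bisp_reactant hbρ hij hsi hsj (hstep (k + 1) ρ j hpl hrl) with h | h
      · exact Ct.sinj (h.trans hsk.symm)
      · exfalso
        have h1 := Ct.sinj (h.trans hsl.symm)
        exact Net.fone_ne_zero (add_left_cancel (h1.trans (add_zero (k + 1)).symm))
    -- hence `m = 0`
    have hkk : k + 2 = k := by
      calc k + 2 = k + 1 + 1 := by ring
        _ = k := hll
    have h20 : (2 : Fin (m + 2)) = 0 := add_left_cancel (hkk.trans (add_zero k).symm)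
    have hm0 : m = 0 := by
      rcases Nat.eq_zero_or_pos m with h | h
      · exact h
      · exact absurd h20 (Net.ftwo_ne_zero (by omega))
    subst hm0
    refine ⟨ρ, i, j, ⟨hij, hsi, hsj⟩, ?_⟩
    have hall : ∀ t : Fin (0 + 2), t = k ∨ t = k + 1 := by
      intro t
      have h1 := t.isLt
      have h2 := k.isLt
      rcases eq_or_ne t.val k.val with h | h
      · exact Or.inl (Fin.ext h)
      · refine Or.inr (Fin.ext ?_)
        rw [Fin.val_add]
        have : (1 : Fin (0 + 2)).val = 1 := rfl
        rw [this]
        omega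
    intro i' r'
    constructor
    · rintro ⟨t, hpt, hst⟩
      constructor
      · rcases hall t with rfl | rfl
        · exact hpt.symm.trans hphik
        · exact hpt.symm.trans hphil
      · rcases hall t with rfl | rfl <;> rcases hst with h | h
        · exact Or.inl (h.symm.trans hsk)
        · exact Or.inr (h.symm.trans hskj)
        · exact Or.inr (h.symm.trans hskj)
        · rw [hll] at h
          exact Or.inl (h.symm.trans hsk)
    · rintro ⟨rfl, rfl | rfl⟩
      · exact ⟨k, hphik, Or.inl hsk⟩
      · exact ⟨k, hphik, Or.inr hskj⟩
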